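/- Upward-closed outflow lemma: let h₁, h₂, h_F be flow graphs with h₁ ⋆ h_F defined, h₁ ⪯ctx h₂, and compatible_⪯(h₁), compatible_⪯(h₂), compatible_⪯(h_F). Let in = (h₁ ⋆ h_F).in and define h_{2+F} = (h₂.X ⊎ h_F.X, h₂.E ⊎ h_F.E, in). Then tf(h₁ ⋆ h_F)(in)(y) ⪯ tf(h_{2+F})(in)(y) for every node y outside h₂.X ∪ h_F.X; moreover the restriction of h_{2+F} to h₂.X lies in closure^{h_F.X}_⪯(h₂) and the restriction of h_{2+F} to h_F.X lies in closure^{h₂.X}_⪯(h_F). -/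

import Mathlib

universe u

/-- A flow monoid: a commutative monoid whose natural order
(`m ≤ n ↔ ∃ o, n = m + o`) is a partial order that forms an ω-cpo, with
continuous addition. `csup` assigns to every ascending chain its join. -/
class FlowMonoid (M : Type u) extends AddCommMonoid M, PartialOrder M, OrderBot M where
  protected add_le_add_left : ∀ a b : M, a ≤ b → ∀ c : M, c + a ≤ c + b
  protected exists_add_of_le : ∀ {a b : M}, a ≤ b → ∃ c : M, b = a + c
  protected le_self_add : ∀ a b : M, a ≤ a + b
  /-- The join of an ascending chain. -/
  csup : (ℕ → M) → M
  isLUB_csup : ∀ K : ℕ → M, Monotone K → IsLUB (Set.range K) (csup K)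
  add_csup : ∀ (n : M) (K : ℕ → M), Monotone K → n + csup K = csup fun i => n + K i

variable {M : Type u} [FlowMonoid M]

/-- Continuity: `f` commutes with joins of ascending chains. -/
def FMCont (f : M → M) : Prop :=
  ∀ K : ℕ → M, Monotone K →
    IsLUB (Set.range fun i => f (K i)) (f (FlowMonoid.csup K))

/-- A flow graph: a finite set of nodes `X ⊆ ℕ`, continuous edge functions, and
a finitely supported inflow from sources outside `X` into `X`. (The edge
functions of sources outside `X` and the inflow outside its domain are
canonically zero.) -/
structure FlowGraph (M : Type u) [FlowMonoid M] where
  /-- The nodes. -/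
  X : Finset ℕ
  /-- The edge functions: `E x y` labels the edge from `x` to `y`. -/
  E : ℕ → ℕ → M → M
  /-- The inflow: `inflow y x` is the flow the graph receives at `x ∈ X` from the
  external node `y ∉ X`. -/
  inflow : ℕ → ℕ → M
  econt : ∀ x y, x ∈ X → FMCont (E x y)
  edom : ∀ x y, x ∉ X → E x y = fun _ => 0
  inflow_fin : ∀ x, (Function.support fun y => inflow y x).Finite
  inflow_dom : ∀ y x, inflow y x ≠ 0 → y ∉ X ∧ x ∈ X

namespace FlowGraph

/-- One step of the flow fixed-point computation, with inflow `i`. -/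
noncomputable def stepWith (h : FlowGraph M) (i : ℕ → ℕ → M) (c : ℕ → M) : ℕ → M :=
  fun x => if x ∈ h.X then (∑ᶠ y, i y x) + ∑ y ∈ h.X, h.E y x (c y) else 0

/-- The flow for a custom inflow `i`, obtained by Kleene iteration: the least
function satisfying the flow equation. -/
noncomputable def flowWith (h : FlowGraph M) (i : ℕ → ℕ → M) : ℕ → M :=
  fun x => FlowMonoid.csup fun n => (h.stepWith i)^[n] (fun _ => 0) x

/-- The flow of a flow graph. -/
noncomputable def flow (h : FlowGraph M) : ℕ → M := h.flowWith h.inflow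

/-- The outflow of a flow graph: `out x y = E x y (flow x)`. -/
noncomputable def out (h : FlowGraph M) (x y : ℕ) : M := h.E x y (h.flow x)

/-- The transfer function: maps an inflow `i` to the resulting outflow at `y`. -/
noncomputable def tf (h : FlowGraph M) (i : ℕ → ℕ → M) (y : ℕ) : M :=
  ∑ x ∈ h.X, h.E x y (h.flowWith i x)

/-- The ghost multiplication of flow graphs: disjoint union of the node sets and
edges; the inflow of each component is restricted to sources outside the other. -/
def gmul (s t : FlowGraph M) : FlowGraph M where
  X := s.X ∪ t.X
  E := fun x y => if x ∈ s.X then s.E x y else t.E x y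
  inflow := fun y x => if y ∈ s.X ∪ t.X then 0 else s.inflow y x + t.inflow y x
  econt := by
    intro x y hx
    try dsimp only
    by_cases hs : x ∈ s.X
    · rw [if_pos hs]; exact s.econt x y hs
    · rw [if_neg hs]
      rcases Finset.mem_union.mp hx with h | h
      · exact absurd h hs
      · exact t.econt x y h
  edom := by
    intro x y hx
    try dsimp only
    rw [if_neg fun h => hx (Finset.mem_union_left _ h)]
    exact t.edom x y fun h => hx (Finset.mem_union_right _ h)
  inflow_fin := by
    intro x
    refine Set.Finite.subset ((s.inflow_fin x).union (t.inflow_fin x)) ?_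
    intro y hy
    rw [Function.mem_support] at hy
    try dsimp only at hy
    by_cases hmem : y ∈ s.X ∪ t.X
    · rw [if_pos hmem] at hy; exact absurd rfl hy
    · rw [if_neg hmem] at hy
      by_cases h1 : s.inflow y x = 0
      · have h2 : t.inflow y x ≠ 0 := fun h2 => hy (by rw [h1, h2, add_zero])
        exact Set.mem_union_right _ (Function.mem_support.mpr h2)
      · exact Set.mem_union_left _ (Function.mem_support.mpr h1)
  inflow_dom := by
    intro y x hy
    try dsimp only at hy
    by_cases hmem : y ∈ s.X ∪ t.X
    · rw [if_pos hmem] at hy; exact absurd rfl hy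
    · rw [if_neg hmem] at hy
      refine ⟨hmem, ?_⟩
      by_cases h1 : s.inflow y x = 0
      · have h2 : t.inflow y x ≠ 0 := fun h2 => hy (by rw [h1, h2, add_zero])
        exact Finset.mem_union_right _ (t.inflow_dom y x h2).2
      · exact Finset.mem_union_left _ (s.inflow_dom y x h1).2

/-- Definedness of the multiplication `s ⋆ t` of flow graphs: the ghost
multiplication is defined, the inflow expectation of each graph at the mutual
boundary matches the outflow of the other, and the flows are preserved in the
composition (whose result is then `gmul s t`). -/
def MDef (s t : FlowGraph M) : Prop :=
  Disjoint s.X t.X ∧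
  (∀ x ∈ s.X, ∀ y ∈ t.X, s.out x y = t.inflow x y ∧ t.out y x = s.inflow y x) ∧
  (∀ x ∈ s.X, (gmul s t).flow x = s.flow x) ∧
  (∀ y ∈ t.X, (gmul s t).flow y = t.flow y)

end FlowGraph

/-- The pointwise join of an ascending chain of functions `X → M`. -/
noncomputable def chainJoin {X : Finset ℕ} (Ch : ℕ → ({x : ℕ // x ∈ X} → M)) :
    {x : ℕ // x ∈ X} → M :=
  fun x => FlowMonoid.csup fun i => Ch i x

/-- `≤`-continuity of a function on `X → M`: it commutes with joins of
pointwise-ascending chains. -/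
def ContOn (X : Finset ℕ)
    (f : ({x : ℕ // x ∈ X} → M) → ({x : ℕ // x ∈ X} → M)) : Prop :=
  ∀ Ch : ℕ → ({x : ℕ // x ∈ X} → M), (∀ i x, Ch i x ≤ Ch (i + 1) x) →
    ∀ x, IsLUB (Set.range fun i => f (Ch i) x) (f (chainJoin Ch) x)

/-- Pointwise `≤`-monotonicity of a function on `X → M`. -/
def MonoOn (X : Finset ℕ)
    (f : ({x : ℕ // x ∈ X} → M) → ({x : ℕ // x ∈ X} → M)) : Prop :=
  ∀ c d : {x : ℕ // x ∈ X} → M, (∀ x, c x ≤ d x) → ∀ x, f c x ≤ f d x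

/-- Pointwise `⪯`-monotonicity of a function on `X → M`. -/
def RMonoOn (r : M → M → Prop) (X : Finset ℕ)
    (f : ({x : ℕ // x ∈ X} → M) → ({x : ℕ // x ∈ X} → M)) : Prop :=
  ∀ c d : {x : ℕ // x ∈ X} → M, (∀ x, r (c x) (d x)) → ∀ x, r (f c x) (f d x)

/-- The join of the Kleene chain `⨆ᵢ fⁱ(⊥)` of a function on `X → M`
(`⊥` is the constant-0 function); for continuous `f` this is `lfp(f)`. -/
noncomputable def kleeneOn {X : Finset ℕ}
    (f : ({x : ℕ // x ∈ X} → M) → ({x : ℕ // x ∈ X} → M)) : {x : ℕ // x ∈ X} → M :=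
  fun x => FlowMonoid.csup fun i => (f^[i] fun _ => 0) x

/-- Condition (C4): for all `≤`-continuous, pointwise-`⪯`-monotone functions
`f, g` on `X → M` with `fⁱ(⊥)` pointwise-`⪯` `gⁱ(⊥)` for all `i` and
`lfp(f)` pointwise-`⪯` `g(lfp(f))`, one has `⨆ᵢ fⁱ(⊥)` pointwise-`⪯` `⨆ᵢ gⁱ(⊥)`. -/
def C4 (r : M → M → Prop) (X : Finset ℕ) : Prop :=
  ∀ f g : ({x : ℕ // x ∈ X} → M) → ({x : ℕ // x ∈ X} → M),
    ContOn X f → ContOn X g → RMonoOn r X f → RMonoOn r X g →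
    (∀ (i : ℕ) (x : {x : ℕ // x ∈ X}), r ((f^[i] fun _ => 0) x) ((g^[i] fun _ => 0) x)) →
    (∀ x, r (kleeneOn f x) (g (kleeneOn f) x)) →
    ∀ x, r (kleeneOn f x) (kleeneOn g x)

/-- `compatible_⪯(h)`: conditions (C1)–(C4) of the relation `⪯` with respect to
the flow graph `h`. -/
def Compatible (r : M → M → Prop) (h : FlowGraph M) : Prop :=
  -- (C1) transitive and `0 ⪯ 0`
  (∀ m n o : M, r m n → r n o → r m o) ∧ r 0 0 ∧
  -- (C2) compatible with addition
  (∀ m n o : M, r m n → r (m + o) (n + o)) ∧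
  -- (C3) the edge functions of `h` are `⪯`-monotone
  (∀ x y : ℕ, x ∈ h.X → ∀ m n : M, r m n → r (h.E x y m) (h.E x y n)) ∧
  -- (C4)
  C4 r h.X
/-- The estimator induced on flow graphs: same nodes, same inflow, and the
transfer functions are related for every smaller inflow. -/
def ctxLe (r : M → M → Prop) (s₁ s₂ : FlowGraph M) : Prop :=
  s₁.X = s₂.X ∧ s₁.inflow = s₂.inflow ∧
  ∀ i : ℕ → ℕ → M, (∀ y x, i y x ≤ s₁.inflow y x) →
    ∀ y, y ∉ s₁.X → r (s₁.tf i y) (s₂.tf i y)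

/-- `inflowLe r Y X i₁ i₂` is the relation `i₁ ⪯^Y i₂` on inflows over node set
`X`: the inflows agree on all sources outside `Y`, and for each target the sums
of the contributions from `Y` are related by `r`. -/
def inflowLe (r : M → M → Prop) (Y X : Finset ℕ) (i₁ i₂ : ℕ → ℕ → M) : Prop :=
  (∀ y, y ∉ Y → ∀ x, i₁ y x = i₂ y x) ∧
  (∀ x ∈ X, r (∑ y ∈ Y, i₁ y x) (∑ y ∈ Y, i₂ y x))

/-- The `⪯`-upward `Y`-closure of a flow graph: all graphs obtained from `h` by
replacing its inflow with a `⪯^Y`-larger one. -/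
def closureSet (r : M → M → Prop) (Y : Finset ℕ) (h : FlowGraph M) :
    Set (FlowGraph M) :=
  {h' | h'.X = h.X ∧ h'.E = h.E ∧ inflowLe r Y h.X h.inflow h'.inflow}

namespace FlowGraph

/-- The restriction `h|_Y` of a flow graph to `Y`: nodes `h.X ∩ Y`, the edge
functions of `h`, and as inflow the original inflow from sources outside `h.X`
together with the outflow from the dropped nodes `h.X ∖ Y`. -/
noncomputable def restrict (h : FlowGraph M) (Y : Finset ℕ) : FlowGraph M where
  X := h.X ∩ Y
  E := fun x y => if x ∈ h.X ∩ Y then h.E x y else fun _ => 0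
  inflow := fun s t =>
    if t ∈ h.X ∩ Y then
      (if s ∈ h.X then (if s ∈ Y then 0 else h.E s t (h.flow s)) else h.inflow s t)
    else 0
  econt := by
    intro x y hx
    try dsimp only
    rw [if_pos hx]
    exact h.econt x y (Finset.mem_inter.mp hx).1
  edom := by
    intro x y hx
    try dsimp only
    rw [if_neg hx]
  inflow_fin := by
    intro t
    refine Set.Finite.subset ((h.X.finite_toSet).union (h.inflow_fin t)) ?_
    intro s hs
    rw [Function.mem_support] at hs
    try dsimp only at hs
    by_cases ht : t ∈ h.X ∩ Y
    · rw [if_pos ht] at hs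
      by_cases hsx : s ∈ h.X
      · exact Set.mem_union_left _ hsx
      · rw [if_neg hsx] at hs
        exact Set.mem_union_right _ (Function.mem_support.mpr hs)
    · rw [if_neg ht] at hs
      exact absurd rfl hs
  inflow_dom := by
    intro s t hst
    try dsimp only at hst
    by_cases ht : t ∈ h.X ∩ Y
    · refine ⟨?_, ht⟩
      intro hmem
      rw [if_pos ht, if_pos (Finset.mem_inter.mp hmem).1,
        if_pos (Finset.mem_inter.mp hmem).2] at hst
      exact hst rfl
    · rw [if_neg ht] at hst
      exact absurd rfl hst

end FlowGraph

instance FlowMonoid.toIsOrderedAddMonoid' : IsOrderedAddMonoid M where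
  add_le_add_left a b h c := by
    rw [add_comm a c, add_comm b c]; exact FlowMonoid.add_le_add_left a b h c

instance FlowMonoid.toCanonicallyOrderedAdd' : CanonicallyOrderedAdd M where
  exists_add_of_le h := FlowMonoid.exists_add_of_le h
  le_self_add a b := FlowMonoid.le_self_add a b
  le_add_self a b := by rw [add_comm]; exact FlowMonoid.le_self_add a b

/-! ### Auxiliary machinery for the proof -/

section Aux

open FlowGraph

lemma le_csup' (K : ℕ → M) (hK : Monotone K) (i : ℕ) : K i ≤ FlowMonoid.csup K :=
  (FlowMonoid.isLUB_csup K hK).1 ⟨i, rfl⟩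

lemma csup_le' (K : ℕ → M) (hK : Monotone K) (u : M) (h : ∀ i, K i ≤ u) :
    FlowMonoid.csup K ≤ u :=
  (FlowMonoid.isLUB_csup K hK).2 (by rintro _ ⟨i, rfl⟩; exact h i)

lemma csup_eq' (K : ℕ → M) (hK : Monotone K) (a : M) (ha : IsLUB (Set.range K) a) :
    FlowMonoid.csup K = a :=
  (FlowMonoid.isLUB_csup K hK).unique ha

lemma isLUB_const' (a : M) : IsLUB (Set.range fun _ : ℕ => a) a := by
  rw [Set.range_const]; exact isLUB_singleton

lemma csup_zero' : FlowMonoid.csup (fun _ : ℕ => (0 : M)) = 0 :=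
  csup_eq' _ monotone_const _ (isLUB_const' 0)

lemma FMCont.mono {f : M → M} (hf : FMCont f) : Monotone f := by
  intro a b hab
  set K : ℕ → M := fun n => if n = 0 then a else b with hKdef
  have hK : Monotone K := by
    intro i j hij
    by_cases hi : i = 0
    · by_cases hj : j = 0 <;> simp [K, hi, hj, hab]
    · have hj : j ≠ 0 := by omega
      simp [K, hi, hj]
  have hcs : FlowMonoid.csup K = b := by
    refine csup_eq' K hK b ⟨?_, ?_⟩
    · rintro _ ⟨i, rfl⟩
      by_cases hi : i = 0 <;> simp [K, hi, hab]
    · intro u hu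
      exact hu ⟨1, by simp [K]⟩
  have h := hf K hK
  rw [hcs] at h
  have h0 : f a = f (K 0) := by simp [K]
  rw [h0]
  exact h.1 ⟨0, rfl⟩

lemma isLUB_add' {a b : ℕ → M} {A B : M} (ha : Monotone a) (hb : Monotone b)
    (hA : IsLUB (Set.range a) A) (hB : IsLUB (Set.range b) B) :
    IsLUB (Set.range fun i => a i + b i) (A + B) := by
  have hAc : A = FlowMonoid.csup a := (csup_eq' a ha A hA).symm
  have hBc : B = FlowMonoid.csup b := (csup_eq' b hb B hB).symm
  constructor
  · rintro _ ⟨i, rfl⟩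
    exact add_le_add (hA.1 ⟨i, rfl⟩) (hB.1 ⟨i, rfl⟩)
  · intro u hu
    have h1 : ∀ i, A + b i ≤ u := by
      intro i
      have he : A + b i = FlowMonoid.csup fun j => a j + b i := by
        calc A + b i = b i + FlowMonoid.csup a := by rw [hAc, add_comm]
          _ = FlowMonoid.csup fun j => b i + a j := FlowMonoid.add_csup _ _ ha
          _ = FlowMonoid.csup fun j => a j + b i := by
                congr 1; funext j; rw [add_comm]
      rw [he]
      refine csup_le' _ (fun j k hjk => add_le_add (ha hjk) le_rfl) _ fun j => ?_
      calc a j + b i ≤ a (max i j) + b (max i j) :=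
            add_le_add (ha (le_max_right i j)) (hb (le_max_left i j))
        _ ≤ u := hu ⟨max i j, rfl⟩
    have he : A + B = FlowMonoid.csup fun i => A + b i := by
      rw [hBc, FlowMonoid.add_csup _ _ hb]
    rw [he]
    exact csup_le' _ (fun i j hij => add_le_add le_rfl (hb hij)) _ h1

lemma isLUB_sum' {ι : Type*} (s : Finset ι) (a : ι → ℕ → M) (A : ι → M)
    (ha : ∀ j ∈ s, Monotone (a j)) (hA : ∀ j ∈ s, IsLUB (Set.range (a j)) (A j)) :
    IsLUB (Set.range fun i => ∑ j ∈ s, a j i) (∑ j ∈ s, A j) := by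
  classical
  induction s using Finset.induction_on with
  | empty => simpa using isLUB_const' (0 : M)
  | @insert j t hj ih =>
    simp only [Finset.sum_insert hj]
    exact isLUB_add' (ha j (Finset.mem_insert_self j t))
      (fun i k hik => Finset.sum_le_sum fun l hl => ha l (Finset.mem_insert_of_mem hl) hik)
      (hA j (Finset.mem_insert_self j t))
      (ih (fun l hl => ha l (Finset.mem_insert_of_mem hl))
        (fun l hl => hA l (Finset.mem_insert_of_mem hl)))

lemma FMCont.isLUB_comp {f : M → M} (hf : FMCont f) (K : ℕ → M) (hK : Monotone K)
    {A : M} (hA : IsLUB (Set.range K) A) :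
    IsLUB (Set.range fun n => f (K n)) (f A) := by
  have h := hf K hK
  rwa [csup_eq' K hK A hA] at h

/-! #### Generic Kleene iteration on `ℕ → M` -/

def PMono (f : (ℕ → M) → ℕ → M) : Prop :=
  ∀ c d : ℕ → M, (∀ x, c x ≤ d x) → ∀ x, f c x ≤ f d x

def PCont (f : (ℕ → M) → ℕ → M) : Prop :=
  ∀ C : ℕ → ℕ → M, (∀ n z, C n z ≤ C (n + 1) z) → ∀ Cs : ℕ → M,
    (∀ z, IsLUB (Set.range fun n => C n z) (Cs z)) →
    ∀ x, IsLUB (Set.range fun n => f (C n) x) (f Cs x)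

noncomputable def kleene (f : (ℕ → M) → ℕ → M) : ℕ → M :=
  fun x => FlowMonoid.csup fun n => (f^[n] fun _ => 0) x

lemma iter_succ_eq (f : (ℕ → M) → ℕ → M) (n : ℕ) :
    f^[n + 1] (fun _ => 0) = f (f^[n] fun _ => 0) := by
  rw [Function.iterate_succ']; rfl

lemma iter_succ_le (f : (ℕ → M) → ℕ → M) (hm : PMono f) (n : ℕ) :
    ∀ x, (f^[n] fun _ => 0) x ≤ (f^[n + 1] fun _ => 0) x := by
  induction n with
  | zero => exact fun x => zero_le
  | succ n ih =>
    rw [iter_succ_eq, iter_succ_eq]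
    exact hm _ _ ih

lemma kleene_chain_mono (f : (ℕ → M) → ℕ → M) (hm : PMono f) (x : ℕ) :
    Monotone fun n => (f^[n] fun _ => 0) x :=
  monotone_nat_of_le_succ fun n => iter_succ_le f hm n x

lemma le_kleene (f : (ℕ → M) → ℕ → M) (hm : PMono f) (n x : ℕ) :
    (f^[n] fun _ => 0) x ≤ kleene f x :=
  le_csup' _ (kleene_chain_mono f hm x) n

lemma isLUB_kleene (f : (ℕ → M) → ℕ → M) (hm : PMono f) (x : ℕ) :
    IsLUB (Set.range fun n => (f^[n] fun _ => 0) x) (kleene f x) :=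
  FlowMonoid.isLUB_csup _ (kleene_chain_mono f hm x)

lemma kleene_le (f : (ℕ → M) → ℕ → M) (hm : PMono f) (u : M) (x : ℕ)
    (h : ∀ n, (f^[n] fun _ => 0) x ≤ u) : kleene f x ≤ u :=
  csup_le' _ (kleene_chain_mono f hm x) u h

lemma kleene_fix (f : (ℕ → M) → ℕ → M) (hm : PMono f) (hc : PCont f) (x : ℕ) :
    f (kleene f) x = kleene f x := by
  have h1 : IsLUB (Set.range fun n => f (f^[n] fun _ => 0) x) (f (kleene f) x) :=
    hc (fun n => f^[n] fun _ => 0) (fun n z => iter_succ_le f hm n z) (kleene f)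
      (fun z => isLUB_kleene f hm z) x
  have h2 : IsLUB (Set.range fun n => f (f^[n] fun _ => 0) x) (kleene f x) := by
    constructor
    · rintro _ ⟨n, rfl⟩
      show f (f^[n] fun _ => 0) x ≤ kleene f x
      rw [← iter_succ_eq f n]
      exact le_kleene f hm (n + 1) x
    · intro u hu
      refine kleene_le f hm u x fun n => ?_
      cases n with
      | zero => exact zero_le
      | succ n =>
        rw [iter_succ_eq]
        exact hu ⟨n, rfl⟩
  exact h1.unique h2

/-! #### Flows parametrized by total inflow -/

noncomputable def stepTot (h : FlowGraph M) (T : ℕ → M) (c : ℕ → M) : ℕ → M :=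
  fun x => if x ∈ h.X then T x + ∑ y ∈ h.X, h.E y x (c y) else 0

noncomputable def flowTot (h : FlowGraph M) (T : ℕ → M) : ℕ → M :=
  kleene (stepTot h T)

lemma flowWith_eq (h : FlowGraph M) (i : ℕ → ℕ → M) :
    h.flowWith i = flowTot h fun x => ∑ᶠ y, i y x := rfl

lemma flow_eq (h : FlowGraph M) :
    h.flow = flowTot h fun x => ∑ᶠ y, h.inflow y x := rfl

lemma E_mono (h : FlowGraph M) {x y : ℕ} (hx : x ∈ h.X) : Monotone (h.E x y) :=
  FMCont.mono (h.econt x y hx)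

lemma stepTot_apply (h : FlowGraph M) (T c : ℕ → M) {x : ℕ} (hx : x ∈ h.X) :
    stepTot h T c x = T x + ∑ y ∈ h.X, h.E y x (c y) := if_pos hx

lemma stepTot_apply_not (h : FlowGraph M) (T c : ℕ → M) {x : ℕ} (hx : x ∉ h.X) :
    stepTot h T c x = 0 := if_neg hx

lemma stepTot_pmono (h : FlowGraph M) (T : ℕ → M) : PMono (stepTot h T) := by
  intro c d hcd x
  by_cases hx : x ∈ h.X
  · rw [stepTot_apply h T c hx, stepTot_apply h T d hx]
    exact add_le_add le_rfl (Finset.sum_le_sum fun y hy => E_mono h hy (hcd y))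
  · rw [stepTot_apply_not h T c hx, stepTot_apply_not h T d hx]

lemma stepTot_pcont (h : FlowGraph M) (T : ℕ → M) : PCont (stepTot h T) := by
  intro C hC Cs hlub x
  have hCm : ∀ z, Monotone fun n => C n z := fun z => monotone_nat_of_le_succ fun n => hC n z
  by_cases hx : x ∈ h.X
  · rw [show (fun n => stepTot h T (C n) x) = fun n => T x + ∑ y ∈ h.X, h.E y x (C n y) from
      funext fun n => stepTot_apply h T (C n) hx, stepTot_apply h T Cs hx]
    exact isLUB_add' monotone_const
      (fun i k hik => Finset.sum_le_sum fun y hy => E_mono h hy (hCm y hik))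
      (isLUB_const' (T x))
      (isLUB_sum' h.X (fun y n => h.E y x (C n y)) (fun y => h.E y x (Cs y))
        (fun y hy => fun i k hik => E_mono h hy (hCm y hik))
        (fun y hy => (h.econt y x hy).isLUB_comp _ (hCm y) (hlub y)))
  · rw [show (fun n => stepTot h T (C n) x) = fun _ => (0 : M) from
      funext fun n => stepTot_apply_not h T (C n) hx, stepTot_apply_not h T Cs hx]
    exact isLUB_const' 0

lemma flowTot_fix (h : FlowGraph M) (T : ℕ → M) (x : ℕ) :
    stepTot h T (flowTot h T) x = flowTot h T x :=
  kleene_fix _ (stepTot_pmono h T) (stepTot_pcont h T) x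

lemma iter_le_flowTot (h : FlowGraph M) (T : ℕ → M) (n x : ℕ) :
    ((stepTot h T)^[n] fun _ => 0) x ≤ flowTot h T x :=
  le_kleene _ (stepTot_pmono h T) n x

lemma iter_zero_out (h : FlowGraph M) (T : ℕ → M) {x : ℕ} (hx : x ∉ h.X) :
    ∀ n, ((stepTot h T)^[n] fun _ => 0) x = 0
  | 0 => rfl
  | n + 1 => by rw [iter_succ_eq]; exact stepTot_apply_not h T _ hx

lemma flowTot_out (h : FlowGraph M) (T : ℕ → M) {x : ℕ} (hx : x ∉ h.X) :
    flowTot h T x = 0 := by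
  show FlowMonoid.csup _ = 0
  rw [show (fun n => ((stepTot h T)^[n] fun _ => 0) x) = fun _ => (0 : M) from
    funext fun n => iter_zero_out h T hx n]
  exact csup_zero'

lemma flowTot_congr (h : FlowGraph M) {T T' : ℕ → M} (hT : ∀ x ∈ h.X, T x = T' x) :
    flowTot h T = flowTot h T' := by
  have hs : stepTot h T = stepTot h T' := by
    funext c x
    by_cases hx : x ∈ h.X
    · rw [stepTot_apply h T c hx, stepTot_apply h T' c hx, hT x hx]
    · rw [stepTot_apply_not h T c hx, stepTot_apply_not h T' c hx]
  unfold flowTot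
  rw [hs]

lemma iter_mono_tot (h : FlowGraph M) {T T' : ℕ → M} (hT : ∀ x, T x ≤ T' x) :
    ∀ n x, ((stepTot h T)^[n] fun _ => 0) x ≤ ((stepTot h T')^[n] fun _ => 0) x := by
  intro n
  induction n with
  | zero => exact fun x => le_rfl
  | succ n ih =>
    intro x
    rw [iter_succ_eq, iter_succ_eq]
    by_cases hx : x ∈ h.X
    · rw [stepTot_apply h T _ hx, stepTot_apply h T' _ hx]
      exact add_le_add (hT x) (Finset.sum_le_sum fun y hy => E_mono h hy (ih y))
    · rw [stepTot_apply_not h T _ hx, stepTot_apply_not h T' _ hx]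

lemma flowTot_mono_tot (h : FlowGraph M) {T T' : ℕ → M} (hT : ∀ x, T x ≤ T' x) (x : ℕ) :
    flowTot h T x ≤ flowTot h T' x :=
  kleene_le _ (stepTot_pmono h T) _ x fun n =>
    (iter_mono_tot h hT n x).trans (iter_le_flowTot h T' n x)

lemma flowTot_cont_tot (h : FlowGraph M) (T : ℕ → ℕ → M) (hTm : ∀ n x, T n x ≤ T (n + 1) x)
    (Ts : ℕ → M) (hT : ∀ x, IsLUB (Set.range fun n => T n x) (Ts x)) (x : ℕ) :
    IsLUB (Set.range fun n => flowTot h (T n) x) (flowTot h Ts x) := by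
  have hTmono : ∀ x, Monotone fun n => T n x := fun x => monotone_nat_of_le_succ fun n => hTm n x
  have hTle : ∀ n x, T n x ≤ Ts x := fun n x => (hT x).1 ⟨n, rfl⟩
  have hitm : ∀ k z, Monotone fun n => ((stepTot h (T n))^[k] fun _ => 0) z := by
    intro k z
    refine monotone_nat_of_le_succ fun n => ?_
    exact iter_mono_tot h (fun w => hTm n w) k z
  have claim : ∀ k x, IsLUB (Set.range fun n => ((stepTot h (T n))^[k] fun _ => 0) x)
      (((stepTot h Ts)^[k] fun _ => 0) x) := by
    intro k
    induction k with
    | zero => intro x; exact isLUB_const' 0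
    | succ k ih =>
      intro x
      have hrw : ∀ S : ℕ → M, (stepTot h S)^[k + 1] (fun _ => 0) =
          stepTot h S ((stepTot h S)^[k] fun _ => 0) := fun S => iter_succ_eq _ k
      simp only [hrw]
      by_cases hx : x ∈ h.X
      · rw [show (fun n => stepTot h (T n) ((stepTot h (T n))^[k] fun _ => 0) x) =
            fun n => T n x + ∑ y ∈ h.X, h.E y x (((stepTot h (T n))^[k] fun _ => 0) y) from
            funext fun n => stepTot_apply h (T n) _ hx,
          stepTot_apply h Ts _ hx]
        exact isLUB_add' (hTmono x)
          (fun i k' hik => Finset.sum_le_sum fun y hy => E_mono h hy (hitm k y hik))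
          (hT x)
          (isLUB_sum' h.X _ _
            (fun y hy => fun i k' hik => E_mono h hy (hitm k y hik))
            (fun y hy => (h.econt y x hy).isLUB_comp _ (hitm k y) (ih y)))
      · rw [show (fun n => stepTot h (T n) ((stepTot h (T n))^[k] fun _ => 0) x) =
            fun _ => (0 : M) from funext fun n => stepTot_apply_not h (T n) _ hx,
          stepTot_apply_not h Ts _ hx]
        exact isLUB_const' 0
  constructor
  · rintro _ ⟨n, rfl⟩
    exact flowTot_mono_tot h (hTle n) x
  · intro u hu
    refine kleene_le _ (stepTot_pmono h Ts) u x fun k => ?_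
    refine (claim k x).2 ?_
    rintro _ ⟨n, rfl⟩
    exact (iter_le_flowTot h (T n) k x).trans (hu ⟨n, rfl⟩)

/-! #### Lifting to subtype functions -/

noncomputable def extFun (X : Finset ℕ) (c : {x : ℕ // x ∈ X} → M) : ℕ → M :=
  fun z => if hz : z ∈ X then c ⟨z, hz⟩ else 0

noncomputable def liftF (X : Finset ℕ) (f : (ℕ → M) → ℕ → M) :
    ({x : ℕ // x ∈ X} → M) → {x : ℕ // x ∈ X} → M :=
  fun c x => f (extFun X c) x.val

def DepOn (X : Finset ℕ) (f : (ℕ → M) → ℕ → M) : Prop :=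
  ∀ c d : ℕ → M, (∀ z ∈ X, c z = d z) → ∀ x ∈ X, f c x = f d x

lemma liftF_iterate {X : Finset ℕ} {f : (ℕ → M) → ℕ → M} (hdep : DepOn X f) :
    ∀ (n : ℕ) (x : {x : ℕ // x ∈ X}),
      ((liftF X f)^[n] fun _ => 0) x = (f^[n] fun _ => 0) x.val := by
  intro n
  induction n with
  | zero => intro x; rfl
  | succ n ih =>
    intro x
    rw [show (liftF X f)^[n + 1] (fun _ => 0) = liftF X f ((liftF X f)^[n] fun _ => 0) from
        by rw [Function.iterate_succ']; rfl,
      iter_succ_eq]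
    show f (extFun X ((liftF X f)^[n] fun _ => 0)) x.val = f (f^[n] fun _ => 0) x.val
    refine hdep _ _ (fun z hz => ?_) x.val x.2
    show (if hz' : z ∈ X then ((liftF X f)^[n] fun _ => 0) ⟨z, hz'⟩ else 0) = _
    rw [dif_pos hz]
    exact ih ⟨z, hz⟩

lemma kleeneOn_liftF {X : Finset ℕ} {f : (ℕ → M) → ℕ → M} (hdep : DepOn X f)
    (x : {x : ℕ // x ∈ X}) : kleeneOn (liftF X f) x = kleene f x.val := by
  unfold kleeneOn kleene
  congr 1
  funext n
  exact liftF_iterate hdep n x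

lemma contOn_liftF {X : Finset ℕ} {f : (ℕ → M) → ℕ → M} (hdep : DepOn X f)
    (hcont : PCont f) : ContOn X (liftF X f) := by
  intro Ch hCh x
  have h1 : ∀ n z, extFun X (Ch n) z ≤ extFun X (Ch (n + 1)) z := by
    intro n z
    unfold extFun
    split
    · exact hCh n _
    · exact le_rfl
  have h2 : ∀ z, IsLUB (Set.range fun n => extFun X (Ch n) z) (extFun X (chainJoin Ch) z) := by
    intro z
    by_cases hz : z ∈ X
    · simp only [extFun, dif_pos hz, chainJoin]
      exact FlowMonoid.isLUB_csup _ (monotone_nat_of_le_succ fun n => hCh n _)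
    · simp only [extFun, dif_neg hz]
      exact isLUB_const' 0
  exact hcont _ h1 _ h2 x.val

lemma rmonoOn_liftF (r : M → M → Prop) {X : Finset ℕ} {f : (ℕ → M) → ℕ → M}
    (hr : ∀ c d : ℕ → M, (∀ z ∈ X, r (c z) (d z)) → ∀ x ∈ X, r (f c x) (f d x)) :
    RMonoOn r X (liftF X f) := by
  intro c d hcd x
  refine hr _ _ (fun z hz => ?_) x.val x.2
  show r (if hz' : z ∈ X then c ⟨z, hz'⟩ else 0) (if hz' : z ∈ X then d ⟨z, hz'⟩ else 0)
  rw [dif_pos hz, dif_pos hz]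
  exact hcd ⟨z, hz⟩

/-! #### Lemmas about a compatible relation -/

lemma r_refl {r : M → M → Prop} (hC2 : ∀ m n o : M, r m n → r (m + o) (n + o))
    (h00 : r 0 0) (m : M) : r m m := by
  have h := hC2 0 0 m h00
  simpa using h

lemma r_addc {r : M → M → Prop} (htr : ∀ m n o : M, r m n → r n o → r m o)
    (hC2 : ∀ m n o : M, r m n → r (m + o) (n + o)) {a b c d : M}
    (h1 : r a b) (h2 : r c d) : r (a + c) (b + d) := by
  refine htr _ (b + c) _ (hC2 _ _ _ h1) ?_
  rw [add_comm b c, add_comm b d]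
  exact hC2 _ _ _ h2

lemma r_add_left {r : M → M → Prop} (htr : ∀ m n o : M, r m n → r n o → r m o)
    (h00 : r 0 0) (hC2 : ∀ m n o : M, r m n → r (m + o) (n + o)) (a : M) {c d : M}
    (h : r c d) : r (a + c) (a + d) :=
  r_addc htr hC2 (r_refl hC2 h00 a) h

lemma r_sum {r : M → M → Prop} (htr : ∀ m n o : M, r m n → r n o → r m o)
    (h00 : r 0 0) (hC2 : ∀ m n o : M, r m n → r (m + o) (n + o))
    {ι : Type*} (s : Finset ι) (f g : ι → M) (h : ∀ j ∈ s, r (f j) (g j)) :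
    r (∑ j ∈ s, f j) (∑ j ∈ s, g j) := by
  classical
  induction s using Finset.induction_on with
  | empty => simpa using h00
  | @insert j t hj ih =>
    rw [Finset.sum_insert hj, Finset.sum_insert hj]
    exact r_addc htr hC2 (h j (Finset.mem_insert_self j t))
      (ih fun l hl => h l (Finset.mem_insert_of_mem hl))

/-- Monotonicity of the flow in the inflow, with respect to a compatible relation. -/
lemma rflow (r : M → M → Prop) (h : FlowGraph M) (hc : Compatible r h) (T1 T2 : ℕ → M)
    (hT : ∀ x ∈ h.X, r (T1 x) (T2 x)) (x : ℕ) : r (flowTot h T1 x) (flowTot h T2 x) := by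
  obtain ⟨htr, h00, hC2, hC3, hC4⟩ := hc
  by_cases hx : x ∈ h.X
  · have hdep : ∀ T : ℕ → M, DepOn h.X (stepTot h T) := by
      intro T c d hcd z hz
      rw [stepTot_apply h T c hz, stepTot_apply h T d hz]
      congr 1
      exact Finset.sum_congr rfl fun y hy => by rw [hcd y hy]
    have hrmono : ∀ Ta Tb : ℕ → M, (∀ z ∈ h.X, r (Ta z) (Tb z)) →
        ∀ c d : ℕ → M, (∀ z ∈ h.X, r (c z) (d z)) →
        ∀ z ∈ h.X, r (stepTot h Ta c z) (stepTot h Tb d z) := by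
      intro Ta Tb hab c d hcd z hz
      rw [stepTot_apply h Ta c hz, stepTot_apply h Tb d hz]
      exact r_addc htr hC2 (hab z hz)
        (r_sum htr h00 hC2 _ _ _ fun y hy => hC3 y z hy _ _ (hcd y hy))
    have chain : ∀ (i : ℕ) (z : ℕ), z ∈ h.X →
        r (((stepTot h T1)^[i] fun _ => 0) z) (((stepTot h T2)^[i] fun _ => 0) z) := by
      intro i
      induction i with
      | zero => intro z _; exact h00
      | succ n ih =>
        intro z hz
        rw [iter_succ_eq, iter_succ_eq]
        exact hrmono T1 T2 hT _ _ (fun w hw => ih w hw) z hz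
    have key := hC4 (liftF h.X (stepTot h T1)) (liftF h.X (stepTot h T2))
      (contOn_liftF (hdep T1) (stepTot_pcont h T1))
      (contOn_liftF (hdep T2) (stepTot_pcont h T2))
      (rmonoOn_liftF r fun c d hcd => hrmono T1 T1 (fun z hz => r_refl hC2 h00 (T1 z)) c d hcd)
      (rmonoOn_liftF r fun c d hcd => hrmono T2 T2 (fun z hz => r_refl hC2 h00 (T2 z)) c d hcd)
      (fun i x' => by
        rw [liftF_iterate (hdep T1), liftF_iterate (hdep T2)]
        exact chain i x'.val x'.2)
      (fun x' => by
        rw [kleeneOn_liftF (hdep T1)]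
        show r (kleene (stepTot h T1) x'.val)
          (stepTot h T2 (extFun h.X (kleeneOn (liftF h.X (stepTot h T1)))) x'.val)
        have hagree : ∀ z ∈ h.X,
            extFun h.X (kleeneOn (liftF h.X (stepTot h T1))) z = flowTot h T1 z := by
          intro z hz
          show (if hz' : z ∈ h.X then kleeneOn (liftF h.X (stepTot h T1)) ⟨z, hz'⟩ else 0) = _
          rw [dif_pos hz]
          exact kleeneOn_liftF (hdep T1) ⟨z, hz⟩
        rw [hdep T2 _ _ hagree x'.val x'.2]
        show r (flowTot h T1 x'.val) (stepTot h T2 (flowTot h T1) x'.val)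
        rw [← flowTot_fix h T1 x'.val]
        exact hrmono T1 T2 hT _ _ (fun w _ => r_refl hC2 h00 _) x'.val x'.2)
      ⟨x, hx⟩
    rwa [kleeneOn_liftF (hdep T1), kleeneOn_liftF (hdep T2)] at key
  · rw [flowTot_out h T1 hx, flowTot_out h T2 hx]
    exact h00

/-! #### Splitting finite sums of inflows -/

lemma finsum_split (i : ℕ → M) (g' : ℕ → M) (A : Finset ℕ)
    (hfin : (Function.support g').Finite)
    (hg : ∀ y, i y = g' y + (if y ∈ A then i y else 0)) :
    ∑ᶠ y, i y = (∑ᶠ y, g' y) + ∑ y ∈ A, i y := by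
  have hsub : (Function.support fun y => if y ∈ A then i y else 0) ⊆ ↑A := by
    intro y hy
    rw [Function.mem_support] at hy
    by_contra hyA
    exact hy (if_neg fun h => hyA (Finset.mem_coe.mpr h))
  have hfin2 : (Function.support fun y => if y ∈ A then i y else 0).Finite :=
    Set.Finite.subset A.finite_toSet hsub
  calc ∑ᶠ y, i y = ∑ᶠ y, (g' y + if y ∈ A then i y else 0) := finsum_congr hg
    _ = (∑ᶠ y, g' y) + ∑ᶠ y, (if y ∈ A then i y else 0) := finsum_add_distrib hfin hfin2
    _ = (∑ᶠ y, g' y) + ∑ y ∈ A, (if y ∈ A then i y else 0) := by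
        rw [finsum_eq_sum_of_support_subset _ hsub]
    _ = (∑ᶠ y, g' y) + ∑ y ∈ A, i y := by
        congr 1
        exact Finset.sum_congr rfl fun y hy => if_pos hy

lemma gmul_inflow_apply (s t : FlowGraph M) (y x : ℕ) :
    (gmul s t).inflow y x =
      if y ∈ s.X ∪ t.X then 0 else s.inflow y x + t.inflow y x := rfl

lemma inflow_zero_of_mem (h : FlowGraph M) {y : ℕ} (hy : y ∈ h.X) (x : ℕ) :
    h.inflow y x = 0 := by
  rcases eq_or_ne (h.inflow y x) 0 with h0 | h0
  · exact h0
  · exact absurd hy (h.inflow_dom y x h0).1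

lemma inflow_zero_of_target (h : FlowGraph M) (y : ℕ) {x : ℕ} (hx : x ∉ h.X) :
    h.inflow y x = 0 := by
  rcases eq_or_ne (h.inflow y x) 0 with h0 | h0
  · exact h0
  · exact absurd (h.inflow_dom y x h0).2 hx

lemma tot_gmul_s (s t : FlowGraph M) (hd : Disjoint s.X t.X) {x : ℕ} (hx : x ∈ s.X) :
    (∑ᶠ y, s.inflow y x) = (∑ᶠ y, (gmul s t).inflow y x) + ∑ y ∈ t.X, s.inflow y x := by
  refine finsum_split _ _ _ ((gmul s t).inflow_fin x) fun y => ?_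
  rw [gmul_inflow_apply]
  by_cases hyt : y ∈ t.X
  · rw [if_pos hyt, if_pos (Finset.mem_union_right _ hyt), zero_add]
  · rw [if_neg hyt, add_zero]
    by_cases hys : y ∈ s.X
    · rw [if_pos (Finset.mem_union_left _ hys)]
      exact inflow_zero_of_mem s hys x
    · rw [if_neg (by simp [Finset.mem_union, hys, hyt]),
        inflow_zero_of_target t y (Finset.disjoint_left.mp hd hx), add_zero]

lemma tot_gmul_t (s t : FlowGraph M) (hd : Disjoint s.X t.X) {x : ℕ} (hx : x ∈ t.X) :
    (∑ᶠ y, t.inflow y x) = (∑ᶠ y, (gmul s t).inflow y x) + ∑ y ∈ s.X, t.inflow y x := by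
  refine finsum_split _ _ _ ((gmul s t).inflow_fin x) fun y => ?_
  rw [gmul_inflow_apply]
  by_cases hys : y ∈ s.X
  · rw [if_pos hys, if_pos (Finset.mem_union_left _ hys), zero_add]
  · rw [if_neg hys, add_zero]
    by_cases hyt : y ∈ t.X
    · rw [if_pos (Finset.mem_union_right _ hyt)]
      exact inflow_zero_of_mem t hyt x
    · rw [if_neg (by simp [Finset.mem_union, hys, hyt]),
        inflow_zero_of_target s y (Finset.disjoint_right.mp hd hx), zero_add]

/-! #### The step function of a ghost product -/

lemma stepTot_gmul (s t : FlowGraph M) (hd : Disjoint s.X t.X) (T c : ℕ → M) (x : ℕ) :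
    stepTot (gmul s t) T c x =
      if x ∈ s.X ∪ t.X then
        T x + ((∑ y ∈ s.X, s.E y x (c y)) + ∑ y ∈ t.X, t.E y x (c y))
      else 0 := by
  by_cases hx : x ∈ s.X ∪ t.X
  · have hx' : x ∈ (gmul s t).X := hx
    rw [stepTot_apply (gmul s t) T c hx', if_pos hx]
    congr 1
    rw [show (gmul s t).X = s.X ∪ t.X from rfl, Finset.sum_union hd]
    congr 1
    · refine Finset.sum_congr rfl fun y hy => ?_
      show (if y ∈ s.X then s.E y x else t.E y x) (c y) = s.E y x (c y)
      rw [if_pos hy]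
    · refine Finset.sum_congr rfl fun y hy => ?_
      show (if y ∈ s.X then s.E y x else t.E y x) (c y) = t.E y x (c y)
      rw [if_neg (Finset.disjoint_right.mp hd hy)]
  · have hx' : x ∉ (gmul s t).X := hx
    rw [stepTot_apply_not (gmul s t) T c hx', if_neg hx]

/-! #### The nested (Bekić) flow operator -/

noncomputable def sigmaF (t : FlowGraph M) (T c : ℕ → M) : ℕ → M :=
  fun x => T x + ∑ y ∈ t.X, t.E y x (c y)

noncomputable def Phi (s t : FlowGraph M) (T c : ℕ → M) : ℕ → M :=
  fun x => if x ∈ t.X then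
    T x + ((∑ y ∈ s.X, s.E y x (flowTot s (sigmaF t T c) y)) + ∑ y ∈ t.X, t.E y x (c y))
  else 0

lemma sigmaF_mono (t : FlowGraph M) (T : ℕ → M) {c d : ℕ → M}
    (hcd : ∀ y ∈ t.X, c y ≤ d y) (z : ℕ) : sigmaF t T c z ≤ sigmaF t T d z :=
  add_le_add le_rfl (Finset.sum_le_sum fun w hw => E_mono t hw (hcd w hw))

lemma Phi_dep (s t : FlowGraph M) (T : ℕ → M) : DepOn t.X (Phi s t T) := by
  intro c d hcd x hx
  have hs : sigmaF t T c = sigmaF t T d := by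
    funext z
    unfold sigmaF
    congr 1
    exact Finset.sum_congr rfl fun y hy => by rw [hcd y hy]
  unfold Phi
  rw [if_pos hx, if_pos hx, hs]
  congr 2
  exact Finset.sum_congr rfl fun y hy => by rw [hcd y hy]

lemma Phi_pmono (s t : FlowGraph M) (T : ℕ → M) : PMono (Phi s t T) := by
  intro c d hcd x
  unfold Phi
  by_cases hx : x ∈ t.X
  · rw [if_pos hx, if_pos hx]
    refine add_le_add le_rfl (add_le_add ?_ ?_)
    · exact Finset.sum_le_sum fun y hy => E_mono s hy
        (flowTot_mono_tot s (fun z => sigmaF_mono t T (fun w _ => hcd w) z) y)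
    · exact Finset.sum_le_sum fun y hy => E_mono t hy (hcd y)
  · rw [if_neg hx, if_neg hx]

lemma Phi_pcont (s t : FlowGraph M) (T : ℕ → M) : PCont (Phi s t T) := by
  intro C hC Cs hlub x
  have hCm : ∀ z, Monotone fun n => C n z := fun z => monotone_nat_of_le_succ fun n => hC n z
  by_cases hx : x ∈ t.X
  · have hsm : ∀ n z, sigmaF t T (C n) z ≤ sigmaF t T (C (n + 1)) z :=
      fun n z => sigmaF_mono t T (fun w _ => hC n w) z
    have hsl : ∀ z, IsLUB (Set.range fun n => sigmaF t T (C n) z) (sigmaF t T Cs z) := by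
      intro z
      unfold sigmaF
      exact isLUB_add' monotone_const
        (fun i k hik => Finset.sum_le_sum fun w hw => E_mono t hw (hCm w hik))
        (isLUB_const' (T z))
        (isLUB_sum' t.X _ _ (fun w hw => fun i k hik => E_mono t hw (hCm w hik))
          (fun w hw => (t.econt w z hw).isLUB_comp _ (hCm w) (hlub w)))
    have hflow : ∀ y, IsLUB (Set.range fun n => flowTot s (sigmaF t T (C n)) y)
        (flowTot s (sigmaF t T Cs) y) :=
      flowTot_cont_tot s (fun n => sigmaF t T (C n)) hsm _ hsl
    have hflowm : ∀ y, Monotone fun n => flowTot s (sigmaF t T (C n)) y := fun y =>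
      monotone_nat_of_le_succ fun n => flowTot_mono_tot s (hsm n) y
    rw [show (fun n => Phi s t T (C n) x) = fun n =>
        T x + ((∑ y ∈ s.X, s.E y x (flowTot s (sigmaF t T (C n)) y)) +
          ∑ y ∈ t.X, t.E y x (C n y)) from funext fun n => if_pos hx,
      show Phi s t T Cs x = T x + ((∑ y ∈ s.X, s.E y x (flowTot s (sigmaF t T Cs) y)) +
        ∑ y ∈ t.X, t.E y x (Cs y)) from if_pos hx]
    refine isLUB_add' monotone_const ?_ (isLUB_const' (T x)) (isLUB_add' ?_ ?_ ?_ ?_)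
    · intro i k hik
      exact add_le_add
        (Finset.sum_le_sum fun y hy => E_mono s hy (hflowm y hik))
        (Finset.sum_le_sum fun y hy => E_mono t hy (hCm y hik))
    · intro i k hik
      exact Finset.sum_le_sum fun y hy => E_mono s hy (hflowm y hik)
    · intro i k hik
      exact Finset.sum_le_sum fun y hy => E_mono t hy (hCm y hik)
    · exact isLUB_sum' s.X _ _ (fun y hy => fun i k hik => E_mono s hy (hflowm y hik))
        (fun y hy => (s.econt y x hy).isLUB_comp _ (hflowm y) (hflow y))
    · exact isLUB_sum' t.X _ _ (fun y hy => fun i k hik => E_mono t hy (hCm y hik))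
        (fun y hy => (t.econt y x hy).isLUB_comp _ (hCm y) (hlub y))
  · rw [show (fun n => Phi s t T (C n) x) = fun _ => (0 : M) from
      funext fun n => if_neg hx, show Phi s t T Cs x = 0 from if_neg hx]
    exact isLUB_const' 0

/-! #### Restriction and Bekić lemmas -/

lemma restrict_s (s t : FlowGraph M) (hd : Disjoint s.X t.X) (T : ℕ → M) :
    ∀ x ∈ s.X, flowTot s (sigmaF t T (flowTot (gmul s t) T)) x = flowTot (gmul s t) T x := by
  have hle : ∀ n, ∀ x ∈ s.X,
      ((stepTot s (sigmaF t T (flowTot (gmul s t) T)))^[n] fun _ => 0) x ≤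
        flowTot (gmul s t) T x := by
    intro n
    induction n with
    | zero => intro x _; exact zero_le
    | succ n ih =>
      intro x hx
      rw [iter_succ_eq, stepTot_apply s _ _ hx]
      calc sigmaF t T (flowTot (gmul s t) T) x +
            ∑ y ∈ s.X, s.E y x
              (((stepTot s (sigmaF t T (flowTot (gmul s t) T)))^[n] fun _ => 0) y)
          ≤ sigmaF t T (flowTot (gmul s t) T) x +
            ∑ y ∈ s.X, s.E y x (flowTot (gmul s t) T y) :=
            add_le_add le_rfl (Finset.sum_le_sum fun y hy => E_mono s hy (ih y hy))
        _ = T x + ((∑ y ∈ s.X, s.E y x (flowTot (gmul s t) T y)) +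
            ∑ y ∈ t.X, t.E y x (flowTot (gmul s t) T y)) := by
            unfold sigmaF
            rw [add_assoc, add_comm (∑ y ∈ t.X, t.E y x (flowTot (gmul s t) T y))]
        _ = stepTot (gmul s t) T (flowTot (gmul s t) T) x := by
            rw [stepTot_gmul s t hd, if_pos (Finset.mem_union_left _ hx)]
        _ = flowTot (gmul s t) T x := flowTot_fix _ _ _
  have hge : ∀ n, ∀ x ∈ s.X,
      ((stepTot (gmul s t) T)^[n] fun _ => 0) x ≤
        flowTot s (sigmaF t T (flowTot (gmul s t) T)) x := by
    intro n
    induction n with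
    | zero => intro x _; exact zero_le
    | succ n ih =>
      intro x hx
      rw [iter_succ_eq, stepTot_gmul s t hd, if_pos (Finset.mem_union_left _ hx)]
      calc T x + ((∑ y ∈ s.X, s.E y x (((stepTot (gmul s t) T)^[n] fun _ => 0) y)) +
            ∑ y ∈ t.X, t.E y x (((stepTot (gmul s t) T)^[n] fun _ => 0) y))
          ≤ T x + ((∑ y ∈ s.X, s.E y x (flowTot s (sigmaF t T (flowTot (gmul s t) T)) y)) +
            ∑ y ∈ t.X, t.E y x (flowTot (gmul s t) T y)) :=
            add_le_add le_rfl (add_le_add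
              (Finset.sum_le_sum fun y hy => E_mono s hy (ih y hy))
              (Finset.sum_le_sum fun y hy => E_mono t hy (iter_le_flowTot _ _ n y)))
        _ = sigmaF t T (flowTot (gmul s t) T) x +
            ∑ y ∈ s.X, s.E y x (flowTot s (sigmaF t T (flowTot (gmul s t) T)) y) := by
            unfold sigmaF
            rw [add_assoc, add_comm (∑ y ∈ t.X, t.E y x (flowTot (gmul s t) T y))]
        _ = stepTot s (sigmaF t T (flowTot (gmul s t) T))
            (flowTot s (sigmaF t T (flowTot (gmul s t) T))) x :=
            (stepTot_apply s _ _ hx).symm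
        _ = flowTot s (sigmaF t T (flowTot (gmul s t) T)) x := flowTot_fix _ _ _
  intro x hx
  refine le_antisymm ?_ ?_
  · exact kleene_le _ (stepTot_pmono s _) _ x fun n => hle n x hx
  · exact kleene_le _ (stepTot_pmono (gmul s t) T) _ x fun n => hge n x hx

lemma bekic (s t : FlowGraph M) (hd : Disjoint s.X t.X) (T : ℕ → M) :
    ∀ x ∈ t.X, kleene (Phi s t T) x = flowTot (gmul s t) T x := by
  have hfixK : ∀ x, Phi s t T (kleene (Phi s t T)) x = kleene (Phi s t T) x :=
    kleene_fix _ (Phi_pmono s t T) (Phi_pcont s t T)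
  have dir1 : ∀ n, ∀ x ∈ t.X,
      ((Phi s t T)^[n] fun _ => 0) x ≤ flowTot (gmul s t) T x := by
    intro n
    induction n with
    | zero => intro x _; exact zero_le
    | succ n ih =>
      intro x hx
      rw [iter_succ_eq, show Phi s t T ((Phi s t T)^[n] fun _ => 0) x =
        T x + ((∑ y ∈ s.X, s.E y x
            (flowTot s (sigmaF t T ((Phi s t T)^[n] fun _ => 0)) y)) +
          ∑ y ∈ t.X, t.E y x (((Phi s t T)^[n] fun _ => 0) y)) from if_pos hx]
      calc T x + ((∑ y ∈ s.X, s.E y x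
              (flowTot s (sigmaF t T ((Phi s t T)^[n] fun _ => 0)) y)) +
            ∑ y ∈ t.X, t.E y x (((Phi s t T)^[n] fun _ => 0) y))
          ≤ T x + ((∑ y ∈ s.X, s.E y x
              (flowTot s (sigmaF t T (flowTot (gmul s t) T)) y)) +
            ∑ y ∈ t.X, t.E y x (flowTot (gmul s t) T y)) :=
            add_le_add le_rfl (add_le_add
              (Finset.sum_le_sum fun y hy => E_mono s hy (flowTot_mono_tot s
                (fun z => sigmaF_mono t T (fun w hw => ih w hw) z) y))
              (Finset.sum_le_sum fun y hy => E_mono t hy (ih y hy)))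
        _ = T x + ((∑ y ∈ s.X, s.E y x (flowTot (gmul s t) T y)) +
            ∑ y ∈ t.X, t.E y x (flowTot (gmul s t) T y)) := by
            congr 2
            exact Finset.sum_congr rfl fun y hy => by rw [restrict_s s t hd T y hy]
        _ = stepTot (gmul s t) T (flowTot (gmul s t) T) x := by
            rw [stepTot_gmul s t hd, if_pos (Finset.mem_union_right _ hx)]
        _ = flowTot (gmul s t) T x := flowTot_fix _ _ _
  have dir2 : ∀ n,
      (∀ x ∈ s.X, ((stepTot (gmul s t) T)^[n] fun _ => 0) x ≤
        flowTot s (sigmaF t T (kleene (Phi s t T))) x) ∧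
      (∀ x ∈ t.X, ((stepTot (gmul s t) T)^[n] fun _ => 0) x ≤ kleene (Phi s t T) x) := by
    intro n
    induction n with
    | zero => exact ⟨fun x _ => zero_le, fun x _ => zero_le⟩
    | succ n ih =>
      obtain ⟨ihs, iht⟩ := ih
      have hbound : ∀ x, ((stepTot (gmul s t) T)^[n + 1] fun _ => 0) x ≤
          T x + ((∑ y ∈ s.X, s.E y x (flowTot s (sigmaF t T (kleene (Phi s t T))) y)) +
            ∑ y ∈ t.X, t.E y x (kleene (Phi s t T) y)) ∨
          ((stepTot (gmul s t) T)^[n + 1] fun _ => 0) x = 0 := by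
        intro x
        by_cases hx : x ∈ s.X ∪ t.X
        · left
          rw [iter_succ_eq, stepTot_gmul s t hd, if_pos hx]
          exact add_le_add le_rfl (add_le_add
            (Finset.sum_le_sum fun y hy => E_mono s hy (ihs y hy))
            (Finset.sum_le_sum fun y hy => E_mono t hy (iht y hy)))
        · right
          rw [iter_succ_eq, stepTot_gmul s t hd, if_neg hx]
      constructor
      · intro x hx
        rcases hbound x with hb | hb
        · refine hb.trans ?_
          have heq : T x + ((∑ y ∈ s.X, s.E y x
              (flowTot s (sigmaF t T (kleene (Phi s t T))) y)) +
              ∑ y ∈ t.X, t.E y x (kleene (Phi s t T) y)) =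
              stepTot s (sigmaF t T (kleene (Phi s t T)))
                (flowTot s (sigmaF t T (kleene (Phi s t T)))) x := by
            rw [stepTot_apply s _ _ hx]
            unfold sigmaF
            rw [add_assoc, add_comm (∑ y ∈ t.X, t.E y x (kleene (Phi s t T) y))]
          rw [heq, flowTot_fix]
        · rw [hb]; exact zero_le
      · intro x hx
        rcases hbound x with hb | hb
        · refine hb.trans ?_
          have heq : T x + ((∑ y ∈ s.X, s.E y x
              (flowTot s (sigmaF t T (kleene (Phi s t T))) y)) +
              ∑ y ∈ t.X, t.E y x (kleene (Phi s t T) y)) =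
              Phi s t T (kleene (Phi s t T)) x := (if_pos hx).symm
          rw [heq, hfixK]
        · rw [hb]; exact zero_le
  intro x hx
  refine le_antisymm ?_ ?_
  · exact kleene_le _ (Phi_pmono s t T) _ x fun n => dir1 n x hx
  · exact kleene_le _ (stepTot_pmono (gmul s t) T) _ x fun n => (dir2 n).2 x hx

lemma Phi_rmono (r : M → M → Prop) (s t : FlowGraph M)
    (hcs : Compatible r s) (hct : Compatible r t) (T : ℕ → M)
    {c d : ℕ → M} (hcd : ∀ z ∈ t.X, r (c z) (d z)) :
    ∀ x ∈ t.X, r (Phi s t T c x) (Phi s t T d x) := by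
  have htr := hcs.1
  have h00 := hcs.2.1
  have hC2 := hcs.2.2.1
  have hC3s := hcs.2.2.2.1
  have hC3t := hct.2.2.2.1
  intro x hx
  rw [show Phi s t T c x = T x + ((∑ y ∈ s.X, s.E y x (flowTot s (sigmaF t T c) y)) +
      ∑ y ∈ t.X, t.E y x (c y)) from if_pos hx,
    show Phi s t T d x = T x + ((∑ y ∈ s.X, s.E y x (flowTot s (sigmaF t T d) y)) +
      ∑ y ∈ t.X, t.E y x (d y)) from if_pos hx]
  refine r_add_left htr h00 hC2 (T x) (r_addc htr hC2 ?_
    (r_sum htr h00 hC2 _ _ _ fun y hy => hC3t y x hy _ _ (hcd y hy)))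
  refine r_sum htr h00 hC2 _ _ _ fun y hy => hC3s y x hy _ _ ?_
  refine rflow r s hcs _ _ (fun z _ => ?_) y
  show r (T z + ∑ w ∈ t.X, t.E w z (c w)) (T z + ∑ w ∈ t.X, t.E w z (d w))
  exact r_add_left htr h00 hC2 (T z)
    (r_sum htr h00 hC2 _ _ _ fun w hw => hC3t w z hw _ _ (hcd w hw))

/-- Key lemma 1: on the nodes of `hF`, the flow of `hF` is `⪯` the flow of
`gmul h₂ hF` (with the inflow of `gmul h₁ hF`). -/
lemma K1lem (r : M → M → Prop) (h₁ h₂ hF : FlowGraph M)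
    (hmul : MDef h₁ hF) (hctx : ctxLe r h₁ h₂)
    (hc₁ : Compatible r h₁) (hc₂ : Compatible r h₂) (hcF : Compatible r hF) :
    ∀ z ∈ hF.X, r (hF.flow z)
      (flowTot (gmul h₂ hF) (fun x => ∑ᶠ y, (gmul h₁ hF).inflow y x) z) := by
  obtain ⟨hX12, hin12, htf⟩ := hctx
  have htr := hc₁.1
  have h00 := hc₁.2.1
  have hC2 := hc₁.2.2.1
  have hC32 := hc₂.2.2.2.1
  have hC3F := hcF.2.2.2.1
  have hd1 : Disjoint h₁.X hF.X := hmul.1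
  have hd2 : Disjoint h₂.X hF.X := hX12 ▸ hmul.1
  set TT : ℕ → M := fun x => ∑ᶠ y, (gmul h₁ hF).inflow y x with hTT
  have hK1flow : ∀ z ∈ hF.X, kleene (Phi h₁ hF TT) z = hF.flow z := by
    intro z hz
    rw [bekic h₁ hF hd1 TT z hz]
    exact hmul.2.2.2 z hz
  have hK2flow : ∀ z ∈ hF.X, kleene (Phi h₂ hF TT) z = flowTot (gmul h₂ hF) TT z :=
    bekic h₂ hF hd2 TT
  have hfix1 : ∀ x, Phi h₁ hF TT (kleene (Phi h₁ hF TT)) x = kleene (Phi h₁ hF TT) x :=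
    kleene_fix _ (Phi_pmono _ _ _) (Phi_pcont _ _ _)
  have Hlem : ∀ c c' : ℕ → M, (∀ z ∈ hF.X, r (c z) (c' z)) →
      (∀ z ∈ hF.X, c z ≤ hF.flow z) →
      ∀ x ∈ hF.X, r (Phi h₁ hF TT c x) (Phi h₂ hF TT c' x) := by
    intro c c' hr hb x hx
    have hxn1 : x ∉ h₁.X := Finset.disjoint_right.mp hd1 hx
    set ic : ℕ → ℕ → M := fun y x' =>
      if x' ∈ h₁.X then
        (gmul h₁ hF).inflow y x' + (if y ∈ hF.X then hF.E y x' (c y) else 0)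
      else 0 with hic
    have hile : ∀ y x', ic y x' ≤ h₁.inflow y x' := by
      intro y x'
      show (if x' ∈ h₁.X then _ else 0) ≤ _
      by_cases hx' : x' ∈ h₁.X
      · rw [if_pos hx']
        by_cases hyF : y ∈ hF.X
        · rw [if_pos hyF, gmul_inflow_apply, if_pos (Finset.mem_union_right _ hyF), zero_add]
          calc hF.E y x' (c y) ≤ hF.E y x' (hF.flow y) := E_mono hF hyF (hb y hyF)
            _ = h₁.inflow y x' := (hmul.2.1 x' hx' y hyF).2
        · rw [if_neg hyF, add_zero, gmul_inflow_apply]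
          by_cases hy1 : y ∈ h₁.X
          · rw [if_pos (Finset.mem_union_left _ hy1)]
            exact zero_le
          · rw [if_neg (by simp [Finset.mem_union, hy1, hyF]),
              inflow_zero_of_target hF y (Finset.disjoint_left.mp hd1 hx'), add_zero]
      · rw [if_neg hx']
        exact zero_le
    have htot : ∀ x' ∈ h₁.X, (∑ᶠ y, ic y x') = sigmaF hF TT c x' := by
      intro x' hx'
      have h1 : ∀ y, ic y x' =
          (gmul h₁ hF).inflow y x' + (if y ∈ hF.X then hF.E y x' (c y) else 0) := by
        intro y
        show (if x' ∈ h₁.X then _ else 0) = _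
        rw [if_pos hx']
      rw [finsum_congr h1]
      have hsub : (Function.support fun y => if y ∈ hF.X then hF.E y x' (c y) else 0)
          ⊆ ↑hF.X := by
        intro y hy
        rw [Function.mem_support] at hy
        by_contra hyF
        exact hy (if_neg fun h => hyF (Finset.mem_coe.mpr h))
      have hfin2 : (Function.support fun y => if y ∈ hF.X then hF.E y x' (c y) else 0).Finite :=
        Set.Finite.subset hF.X.finite_toSet hsub
      rw [finsum_add_distrib ((gmul h₁ hF).inflow_fin x') hfin2]
      unfold sigmaF
      congr 1
      rw [finsum_eq_sum_of_support_subset _ hsub]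
      exact Finset.sum_congr rfl fun y hy => if_pos hy
    have hflowc1 : flowTot h₁ (fun x' => ∑ᶠ y, ic y x') = flowTot h₁ (sigmaF hF TT c) :=
      flowTot_congr h₁ htot
    have hflowc2 : flowTot h₂ (fun x' => ∑ᶠ y, ic y x') = flowTot h₂ (sigmaF hF TT c) :=
      flowTot_congr h₂ fun x' hx' => htot x' (by rw [hX12]; exact hx')
    have hstep1 : r (h₁.tf ic x) (h₂.tf ic x) := htf ic hile x hxn1
    have htf1 : h₁.tf ic x = ∑ y ∈ h₁.X, h₁.E y x (flowTot h₁ (sigmaF hF TT c) y) := by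
      refine Finset.sum_congr rfl fun y _ => ?_
      rw [flowWith_eq, hflowc1]
    have htf2 : h₂.tf ic x = ∑ y ∈ h₂.X, h₂.E y x (flowTot h₂ (sigmaF hF TT c) y) := by
      refine Finset.sum_congr rfl fun y _ => ?_
      rw [flowWith_eq, hflowc2]
    have hstep2 : r (∑ y ∈ h₂.X, h₂.E y x (flowTot h₂ (sigmaF hF TT c) y))
        (∑ y ∈ h₂.X, h₂.E y x (flowTot h₂ (sigmaF hF TT c') y)) := by
      refine r_sum htr h00 hC2 _ _ _ fun y hy => hC32 y x hy _ _ ?_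
      refine rflow r h₂ hc₂ _ _ (fun z _ => ?_) y
      show r (TT z + ∑ w ∈ hF.X, hF.E w z (c w)) (TT z + ∑ w ∈ hF.X, hF.E w z (c' w))
      exact r_add_left htr h00 hC2 (TT z)
        (r_sum htr h00 hC2 _ _ _ fun w hw => hC3F w z hw _ _ (hr w hw))
    rw [show Phi h₁ hF TT c x = TT x +
        ((∑ y ∈ h₁.X, h₁.E y x (flowTot h₁ (sigmaF hF TT c) y)) +
          ∑ y ∈ hF.X, hF.E y x (c y)) from if_pos hx,
      show Phi h₂ hF TT c' x = TT x +
        ((∑ y ∈ h₂.X, h₂.E y x (flowTot h₂ (sigmaF hF TT c') y)) +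
          ∑ y ∈ hF.X, hF.E y x (c' y)) from if_pos hx]
    refine r_add_left htr h00 hC2 (TT x) (r_addc htr hC2 ?_
      (r_sum htr h00 hC2 _ _ _ fun y hy => hC3F y x hy _ _ (hr y hy)))
    rw [← htf1]
    exact htr _ _ _ hstep1 (by rw [htf2]; exact hstep2)
  have chain : ∀ i, ∀ z ∈ hF.X,
      r (((Phi h₁ hF TT)^[i] fun _ => 0) z) (((Phi h₂ hF TT)^[i] fun _ => 0) z) := by
    intro i
    induction i with
    | zero => intro z _; exact h00
    | succ n ih =>
      intro z hz
      rw [iter_succ_eq, iter_succ_eq]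
      refine Hlem _ _ (fun w hw => ih w hw) (fun w hw => ?_) z hz
      exact (le_kleene _ (Phi_pmono _ _ _) n w).trans (le_of_eq (hK1flow w hw))
  have key := hcF.2.2.2.2 (liftF hF.X (Phi h₁ hF TT)) (liftF hF.X (Phi h₂ hF TT))
    (contOn_liftF (Phi_dep _ _ _) (Phi_pcont _ _ _))
    (contOn_liftF (Phi_dep _ _ _) (Phi_pcont _ _ _))
    (rmonoOn_liftF r fun c d hcd => Phi_rmono r h₁ hF hc₁ hcF TT hcd)
    (rmonoOn_liftF r fun c d hcd => Phi_rmono r h₂ hF hc₂ hcF TT hcd)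
    (fun i x' => by
      rw [liftF_iterate (Phi_dep h₁ hF TT), liftF_iterate (Phi_dep h₂ hF TT)]
      exact chain i x'.val x'.2)
    (fun x' => by
      rw [kleeneOn_liftF (Phi_dep h₁ hF TT)]
      show r (kleene (Phi h₁ hF TT) x'.val)
        (Phi h₂ hF TT (extFun hF.X (kleeneOn (liftF hF.X (Phi h₁ hF TT)))) x'.val)
      have hagree : ∀ z ∈ hF.X,
          extFun hF.X (kleeneOn (liftF hF.X (Phi h₁ hF TT))) z =
            kleene (Phi h₁ hF TT) z := by
        intro z hz
        show (if hz' : z ∈ hF.X then kleeneOn (liftF hF.X (Phi h₁ hF TT)) ⟨z, hz'⟩ else 0) = _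
        rw [dif_pos hz]
        exact kleeneOn_liftF (Phi_dep h₁ hF TT) ⟨z, hz⟩
      rw [Phi_dep h₂ hF TT _ _ hagree x'.val x'.2, ← hfix1 x'.val]
      exact Hlem _ _ (fun w _ => r_refl hC2 h00 _)
        (fun w hw => le_of_eq (hK1flow w hw)) x'.val x'.2)
  intro z hz
  have hkey := key ⟨z, hz⟩
  rw [kleeneOn_liftF (Phi_dep h₁ hF TT), kleeneOn_liftF (Phi_dep h₂ hF TT)] at hkey
  rw [hK1flow z hz, hK2flow z hz] at hkey
  exact hkey

/-- Key lemma 2: the outflow of the `h₁` part is `⪯` that of the `h₂` part. -/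
lemma K2lem (r : M → M → Prop) (h₁ h₂ hF : FlowGraph M)
    (hmul : MDef h₁ hF) (hctx : ctxLe r h₁ h₂)
    (hc₁ : Compatible r h₁) (hc₂ : Compatible r h₂) (hcF : Compatible r hF) :
    ∀ x ∉ h₁.X, r (∑ y ∈ h₁.X, h₁.E y x (h₁.flow y))
      (∑ y ∈ h₂.X, h₂.E y x
        (flowTot (gmul h₂ hF) (fun z => ∑ᶠ w, (gmul h₁ hF).inflow w z) y)) := by
  have hK1 := K1lem r h₁ h₂ hF hmul hctx hc₁ hc₂ hcF
  obtain ⟨hX12, hin12, htf⟩ := hctx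
  have htr := hc₁.1
  have h00 := hc₁.2.1
  have hC2 := hc₁.2.2.1
  have hC32 := hc₂.2.2.2.1
  have hC3F := hcF.2.2.2.1
  have hd2 : Disjoint h₂.X hF.X := hX12 ▸ hmul.1
  set TT : ℕ → M := fun z => ∑ᶠ w, (gmul h₁ hF).inflow w z with hTT
  intro x hx
  have hstep1 : r (h₁.tf h₁.inflow x) (h₂.tf h₁.inflow x) :=
    htf h₁.inflow (fun _ _ => le_rfl) x hx
  have htot2 : ∀ z ∈ h₂.X, (∑ᶠ w, h₁.inflow w z) = ∑ᶠ w, h₂.inflow w z :=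
    fun z _ => by rw [hin12]
  have htf2 : h₂.tf h₁.inflow x =
      ∑ y ∈ h₂.X, h₂.E y x (flowTot h₂ (fun z => ∑ᶠ w, h₂.inflow w z) y) := by
    refine Finset.sum_congr rfl fun y _ => ?_
    rw [flowWith_eq, flowTot_congr h₂ htot2]
  have hTTeq : ∀ z, (∑ᶠ w, (gmul h₂ hF).inflow w z) = TT z := by
    intro z
    have hgeq : (gmul h₁ hF).inflow = (gmul h₂ hF).inflow := by
      funext w z'
      show (if w ∈ h₁.X ∪ hF.X then 0 else h₁.inflow w z' + hF.inflow w z') =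
        (if w ∈ h₂.X ∪ hF.X then 0 else h₂.inflow w z' + hF.inflow w z')
      rw [hX12, hin12]
    rw [hTT, hgeq]
  have hrtot : ∀ z ∈ h₂.X, r (∑ᶠ w, h₂.inflow w z)
      (sigmaF hF TT (flowTot (gmul h₂ hF) TT) z) := by
    intro z hz
    rw [tot_gmul_s h₂ hF hd2 hz, hTTeq z]
    show r (TT z + ∑ w ∈ hF.X, h₂.inflow w z)
      (TT z + ∑ w ∈ hF.X, hF.E w z (flowTot (gmul h₂ hF) TT w))
    refine r_add_left htr h00 hC2 (TT z) (r_sum htr h00 hC2 _ _ _ fun w hw => ?_)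
    have hbe : h₂.inflow w z = hF.E w z (hF.flow w) := by
      rw [← hin12]
      exact ((hmul.2.1 z (by rw [hX12]; exact hz) w hw).2).symm
    rw [hbe]
    exact hC3F w z hw _ _ (hK1 w hw)
  have hstep2 : ∀ y, r (flowTot h₂ (fun z => ∑ᶠ w, h₂.inflow w z) y)
      (flowTot h₂ (sigmaF hF TT (flowTot (gmul h₂ hF) TT)) y) :=
    rflow r h₂ hc₂ _ _ hrtot
  have hres : ∀ y ∈ h₂.X, flowTot h₂ (sigmaF hF TT (flowTot (gmul h₂ hF) TT)) y =
      flowTot (gmul h₂ hF) TT y := restrict_s h₂ hF hd2 TT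
  refine htr _ _ _ hstep1 ?_
  rw [htf2]
  refine htr _ _ _
    (r_sum htr h00 hC2 _ _ _ fun y hy => hC32 y x hy _ _ (hstep2 y)) ?_
  have heq : (∑ y ∈ h₂.X, h₂.E y x (flowTot h₂
      (sigmaF hF TT (flowTot (gmul h₂ hF) TT)) y)) =
      ∑ y ∈ h₂.X, h₂.E y x (flowTot (gmul h₂ hF) TT y) :=
    Finset.sum_congr rfl fun y hy => by rw [hres y hy]
  rw [heq]
  exact r_refl hC2 h00 _

end Aux
open FlowGraph in
/-- Upward-closed outflow lemma. For `h₁ ⋆ h_F` defined,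
`h₁ ⪯ctx h₂` and `⪯` compatible with `h₁`, `h₂`, `h_F`, the graph
`h_{2+F} = (h₂.X ⊎ h_F.X, h₂.E ⊎ h_F.E, (h₁ ⋆ h_F).in)` (which is `h₂ ⌢ h_F`)
has a `⪯`-larger transfer function on the inflow `(h₁ ⋆ h_F).in` than
`h₁ ⋆ h_F`, its restriction to `h₂.X` lies in `closure^{h_F.X}_⪯(h₂)`, and its
restriction to `h_F.X` lies in `closure^{h₂.X}_⪯(h_F)`. -/
theorem upward_closed_outflow (r : M → M → Prop) (h₁ h₂ hF : FlowGraph M)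
    (hmul : MDef h₁ hF) (hctx : ctxLe r h₁ h₂)
    (hc₁ : Compatible r h₁) (hc₂ : Compatible r h₂) (hcF : Compatible r hF) :
    (∀ y, y ∉ h₂.X ∪ hF.X →
      r ((gmul h₁ hF).tf (gmul h₁ hF).inflow y) ((gmul h₂ hF).tf (gmul h₁ hF).inflow y)) ∧
    restrict (gmul h₂ hF) h₂.X ∈ closureSet r hF.X h₂ ∧
    restrict (gmul h₂ hF) hF.X ∈ closureSet r h₂.X hF := by
  classical
  have hK1 := K1lem r h₁ h₂ hF hmul hctx hc₁ hc₂ hcF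
  have hK2 := K2lem r h₁ h₂ hF hmul hctx hc₁ hc₂ hcF
  obtain ⟨hX12, hin12, htf⟩ := hctx
  have htr := hc₁.1
  have h00 := hc₁.2.1
  have hC2 := hc₁.2.2.1
  have hC3F := hcF.2.2.2.1
  have hd1 : Disjoint h₁.X hF.X := hmul.1
  have hd2 : Disjoint h₂.X hF.X := hX12 ▸ hmul.1
  set TT : ℕ → M := fun z => ∑ᶠ w, (gmul h₁ hF).inflow w z with hTT
  have hTTeq : ∀ z, (∑ᶠ w, (gmul h₂ hF).inflow w z) = TT z := by
    intro z
    have hgeq : (gmul h₁ hF).inflow = (gmul h₂ hF).inflow := by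
      funext w z'
      show (if w ∈ h₁.X ∪ hF.X then 0 else h₁.inflow w z' + hF.inflow w z') =
        (if w ∈ h₂.X ∪ hF.X then 0 else h₂.inflow w z' + hF.inflow w z')
      rw [hX12, hin12]
    rw [hTT, hgeq]
  have hg2flow : ∀ y, (gmul h₂ hF).flow y = flowTot (gmul h₂ hF) TT y := by
    intro y
    show flowTot (gmul h₂ hF) (fun z => ∑ᶠ w, (gmul h₂ hF).inflow w z) y =
      flowTot (gmul h₂ hF) TT y
    rw [flowTot_congr (gmul h₂ hF) fun z _ => hTTeq z]
  have hmemF1 : ∀ {x : ℕ}, x ∈ hF.X → x ∉ h₁.X := fun hx => Finset.disjoint_right.mp hd1 hx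
  have hmemF2 : ∀ {x : ℕ}, x ∈ hF.X → x ∉ h₂.X := fun hx => Finset.disjoint_right.mp hd2 hx
  have hmem2F : ∀ {x : ℕ}, x ∈ h₂.X → x ∉ hF.X := fun hx => Finset.disjoint_left.mp hd2 hx
  refine ⟨?_, ⟨?_, ?_, ?_, ?_⟩, ⟨?_, ?_, ?_, ?_⟩⟩
  · -- part 1
    intro y hy
    have hy2 : y ∉ h₂.X := fun h => hy (Finset.mem_union_left _ h)
    have hyF : y ∉ hF.X := fun h => hy (Finset.mem_union_right _ h)
    have hy1 : y ∉ h₁.X := by rw [hX12]; exact hy2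
    have hL : (gmul h₁ hF).tf (gmul h₁ hF).inflow y =
        (∑ x ∈ h₁.X, h₁.E x y (h₁.flow x)) + ∑ x ∈ hF.X, hF.E x y (hF.flow x) := by
      show (∑ x ∈ (gmul h₁ hF).X,
        (gmul h₁ hF).E x y ((gmul h₁ hF).flowWith (gmul h₁ hF).inflow x)) = _
      rw [show (gmul h₁ hF).X = h₁.X ∪ hF.X from rfl, Finset.sum_union hd1]
      congr 1
      · refine Finset.sum_congr rfl fun x hx => ?_
        show (if x ∈ h₁.X then h₁.E x y else hF.E x y)
          ((gmul h₁ hF).flowWith (gmul h₁ hF).inflow x) = _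
        rw [if_pos hx]
        congr 1
        exact hmul.2.2.1 x hx
      · refine Finset.sum_congr rfl fun x hx => ?_
        show (if x ∈ h₁.X then h₁.E x y else hF.E x y)
          ((gmul h₁ hF).flowWith (gmul h₁ hF).inflow x) = _
        rw [if_neg (hmemF1 hx)]
        congr 1
        exact hmul.2.2.2 x hx
    have hR : (gmul h₂ hF).tf (gmul h₁ hF).inflow y =
        (∑ x ∈ h₂.X, h₂.E x y (flowTot (gmul h₂ hF) TT x)) +
          ∑ x ∈ hF.X, hF.E x y (flowTot (gmul h₂ hF) TT x) := by
      show (∑ x ∈ (gmul h₂ hF).X,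
        (gmul h₂ hF).E x y ((gmul h₂ hF).flowWith (gmul h₁ hF).inflow x)) = _
      rw [show (gmul h₂ hF).X = h₂.X ∪ hF.X from rfl, Finset.sum_union hd2]
      congr 1
      · refine Finset.sum_congr rfl fun x hx => ?_
        show (if x ∈ h₂.X then h₂.E x y else hF.E x y)
          ((gmul h₂ hF).flowWith (gmul h₁ hF).inflow x) = _
        rw [if_pos hx]
        exact rfl
      · refine Finset.sum_congr rfl fun x hx => ?_
        show (if x ∈ h₂.X then h₂.E x y else hF.E x y)
          ((gmul h₂ hF).flowWith (gmul h₁ hF).inflow x) = _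
        rw [if_neg (hmemF2 hx)]
        exact rfl
    rw [hL, hR]
    exact r_addc htr hC2 (hK2 y hy1)
      (r_sum htr h00 hC2 _ _ _ fun x hx => hC3F x y hx _ _ (hK1 x hx))
  · -- part 2: node set
    show (gmul h₂ hF).X ∩ h₂.X = h₂.X
    rw [show (gmul h₂ hF).X = h₂.X ∪ hF.X from rfl]
    ext a
    simp only [Finset.mem_inter, Finset.mem_union]
    tauto
  · -- part 2: edges
    show (restrict (gmul h₂ hF) h₂.X).E = h₂.E
    funext a b
    show (if a ∈ (gmul h₂ hF).X ∩ h₂.X then (gmul h₂ hF).E a b else fun _ => 0) = h₂.E a b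
    by_cases ha : a ∈ h₂.X
    · rw [if_pos (show a ∈ (gmul h₂ hF).X ∩ h₂.X from Finset.mem_inter.mpr ⟨Finset.mem_union_left _ ha, ha⟩)]
      show (if a ∈ h₂.X then h₂.E a b else hF.E a b) = h₂.E a b
      rw [if_pos ha]
    · rw [if_neg fun h => ha (Finset.mem_inter.mp h).2]
      exact (h₂.edom a b ha).symm
  · -- part 2: inflows agree off hF.X
    intro y hyF x
    show h₂.inflow y x = (if x ∈ (gmul h₂ hF).X ∩ h₂.X then
      (if y ∈ (gmul h₂ hF).X then
        (if y ∈ h₂.X then 0 else (gmul h₂ hF).E y x ((gmul h₂ hF).flow y))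
      else (gmul h₂ hF).inflow y x) else 0)
    by_cases hx2 : x ∈ h₂.X
    · rw [if_pos (show x ∈ (gmul h₂ hF).X ∩ h₂.X from Finset.mem_inter.mpr ⟨Finset.mem_union_left _ hx2, hx2⟩)]
      by_cases hy2 : y ∈ h₂.X
      · rw [if_pos (show y ∈ (gmul h₂ hF).X from Finset.mem_union_left _ hy2), if_pos hy2]
        exact inflow_zero_of_mem h₂ hy2 x
      · have hyg : y ∉ (gmul h₂ hF).X := by
          rw [show (gmul h₂ hF).X = h₂.X ∪ hF.X from rfl]
          simp [Finset.mem_union, hy2, hyF]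
        rw [if_neg hyg]
        show h₂.inflow y x = (if y ∈ h₂.X ∪ hF.X then 0 else h₂.inflow y x + hF.inflow y x)
        rw [if_neg (by simp [Finset.mem_union, hy2, hyF]),
          inflow_zero_of_target hF y (hmem2F hx2), add_zero]
    · rw [if_neg fun h => hx2 (Finset.mem_inter.mp h).2]
      exact inflow_zero_of_target h₂ y hx2
  · -- part 2: boundary inflow comparison
    intro x hx2
    have e1 : ∑ y ∈ hF.X, h₂.inflow y x = ∑ y ∈ hF.X, hF.E y x (hF.flow y) := by
      refine Finset.sum_congr rfl fun y hy => ?_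
      rw [← hin12]
      exact ((hmul.2.1 x (by rw [hX12]; exact hx2) y hy).2).symm
    have e2 : ∑ y ∈ hF.X, (restrict (gmul h₂ hF) h₂.X).inflow y x =
        ∑ y ∈ hF.X, hF.E y x (flowTot (gmul h₂ hF) TT y) := by
      refine Finset.sum_congr rfl fun y hy => ?_
      show (if x ∈ (gmul h₂ hF).X ∩ h₂.X then
        (if y ∈ (gmul h₂ hF).X then
          (if y ∈ h₂.X then 0 else (gmul h₂ hF).E y x ((gmul h₂ hF).flow y))
        else (gmul h₂ hF).inflow y x) else 0) = _
      rw [if_pos (show x ∈ (gmul h₂ hF).X ∩ h₂.X from Finset.mem_inter.mpr ⟨Finset.mem_union_left _ hx2, hx2⟩),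
        if_pos (show y ∈ (gmul h₂ hF).X from Finset.mem_union_right _ hy),
        if_neg (hmemF2 hy)]
      show (if y ∈ h₂.X then h₂.E y x else hF.E y x) ((gmul h₂ hF).flow y) = _
      rw [if_neg (hmemF2 hy), hg2flow y]
    rw [e1, e2]
    exact r_sum htr h00 hC2 _ _ _ fun y hy => hC3F y x hy _ _ (hK1 y hy)
  · -- part 3: node set
    show (gmul h₂ hF).X ∩ hF.X = hF.X
    rw [show (gmul h₂ hF).X = h₂.X ∪ hF.X from rfl]
    ext a
    simp only [Finset.mem_inter, Finset.mem_union]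
    tauto
  · -- part 3: edges
    show (restrict (gmul h₂ hF) hF.X).E = hF.E
    funext a b
    show (if a ∈ (gmul h₂ hF).X ∩ hF.X then (gmul h₂ hF).E a b else fun _ => 0) = hF.E a b
    by_cases ha : a ∈ hF.X
    · rw [if_pos (show a ∈ (gmul h₂ hF).X ∩ hF.X from Finset.mem_inter.mpr ⟨Finset.mem_union_right _ ha, ha⟩)]
      show (if a ∈ h₂.X then h₂.E a b else hF.E a b) = hF.E a b
      rw [if_neg (hmemF2 ha)]
    · rw [if_neg fun h => ha (Finset.mem_inter.mp h).2]
      exact (hF.edom a b ha).symm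
  · -- part 3: inflows agree off h₂.X
    intro y hy2 x
    show hF.inflow y x = (if x ∈ (gmul h₂ hF).X ∩ hF.X then
      (if y ∈ (gmul h₂ hF).X then
        (if y ∈ hF.X then 0 else (gmul h₂ hF).E y x ((gmul h₂ hF).flow y))
      else (gmul h₂ hF).inflow y x) else 0)
    by_cases hxF : x ∈ hF.X
    · rw [if_pos (show x ∈ (gmul h₂ hF).X ∩ hF.X from Finset.mem_inter.mpr ⟨Finset.mem_union_right _ hxF, hxF⟩)]
      by_cases hyF : y ∈ hF.X
      · rw [if_pos (show y ∈ (gmul h₂ hF).X from Finset.mem_union_right _ hyF), if_pos hyF]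
        exact inflow_zero_of_mem hF hyF x
      · have hyg : y ∉ (gmul h₂ hF).X := by
          rw [show (gmul h₂ hF).X = h₂.X ∪ hF.X from rfl]
          simp [Finset.mem_union, hy2, hyF]
        rw [if_neg hyg]
        show hF.inflow y x = (if y ∈ h₂.X ∪ hF.X then 0 else h₂.inflow y x + hF.inflow y x)
        rw [if_neg (by simp [Finset.mem_union, hy2, hyF]),
          inflow_zero_of_target h₂ y (hmemF2 hxF), zero_add]
    · rw [if_neg fun h => hxF (Finset.mem_inter.mp h).2]
      exact inflow_zero_of_target hF y hxF
  · -- part 3: boundary inflow comparison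
    intro x hxF
    have e1 : ∑ y ∈ h₂.X, hF.inflow y x = ∑ y ∈ h₂.X, h₁.E y x (h₁.flow y) := by
      refine Finset.sum_congr rfl fun y hy => ?_
      exact ((hmul.2.1 y (by rw [hX12]; exact hy) x hxF).1).symm
    have e2 : ∑ y ∈ h₂.X, (restrict (gmul h₂ hF) hF.X).inflow y x =
        ∑ y ∈ h₂.X, h₂.E y x (flowTot (gmul h₂ hF) TT y) := by
      refine Finset.sum_congr rfl fun y hy => ?_
      show (if x ∈ (gmul h₂ hF).X ∩ hF.X then
        (if y ∈ (gmul h₂ hF).X then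
          (if y ∈ hF.X then 0 else (gmul h₂ hF).E y x ((gmul h₂ hF).flow y))
        else (gmul h₂ hF).inflow y x) else 0) = _
      rw [if_pos (show x ∈ (gmul h₂ hF).X ∩ hF.X from Finset.mem_inter.mpr ⟨Finset.mem_union_right _ hxF, hxF⟩),
        if_pos (show y ∈ (gmul h₂ hF).X from Finset.mem_union_left _ hy),
        if_neg (hmem2F hy)]
      show (if y ∈ h₂.X then h₂.E y x else hF.E y x) ((gmul h₂ hF).flow y) = _
      rw [if_pos hy, hg2flow y]
    rw [e1, e2]
    have e3 : (∑ y ∈ h₁.X, h₁.E y x (h₁.flow y)) = ∑ y ∈ h₂.X, h₁.E y x (h₁.flow y) := by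
      rw [hX12]
    rw [← e3]
    exact hK2 x (hmemF1 hxF)
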